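/- Let ξ_1,…,ξ_n be i.i.d. random variables with P[ξ_j = 1] = τ and P[ξ_j = 0] = 1-τ. Then for every positive integer q, E[(∑_{j=1}^n ξ_j)^q] ≤ (q + e·τ·n)^q. -/

import Mathlib

open MeasureTheory ProbabilityTheory

-- first-occurrence positions of f
private def firsts {n q : ℕ} (f : Fin q → Fin n) : Finset (Fin q) :=
  Finset.univ.filter (fun i => ∀ i' < i, f i' ≠ f i)

private lemma card_image_eq_card_firsts {n q : ℕ} (f : Fin q → Fin n) :
    (Finset.univ.image f).card = (firsts f).card := by
  classical
  have himg : (firsts f).image f = Finset.univ.image f := by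
    apply Finset.Subset.antisymm
    · exact Finset.image_subset_image (Finset.filter_subset _ _)
    · intro j hj
      obtain ⟨i, -, hfi⟩ := Finset.mem_image.1 hj
      set s := Finset.univ.filter (fun i' => f i' = j) with hs
      have hne : s.Nonempty := ⟨i, by simp [hs, hfi]⟩
      have hmem : f (s.min' hne) = j := (Finset.mem_filter.1 (s.min'_mem hne)).2
      refine Finset.mem_image.2 ⟨s.min' hne, ?_, hmem⟩
      simp only [firsts, Finset.mem_filter, Finset.mem_univ, true_and]
      intro i' hlt hne'
      have : i' ∈ s := by rw [hs]; exact Finset.mem_filter.2 ⟨Finset.mem_univ _, hne'.trans hmem⟩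
      exact absurd (s.min'_le _ this) (not_le.2 hlt)
  rw [← himg]
  apply Finset.card_image_of_injOn
  intro a ha b hb hab
  by_contra hne
  rcases lt_or_gt_of_ne hne with h | h
  · exact (Finset.mem_filter.1 hb).2 a h hab
  · exact (Finset.mem_filter.1 ha).2 b h hab.symm

private lemma comb_bound (n q : ℕ) (τ : ℝ) (hτ : 0 ≤ τ) :
    ∑ f : Fin q → Fin n, τ ^ (Finset.univ.image f).card ≤ (τ * n + q) ^ q := by
  classical
  set w : Fin n ⊕ Fin q → ℝ := Sum.elim (fun _ => τ) (fun _ => 1) with hw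
  set F : (Fin q → Fin n) → Fin q → Fin n ⊕ Fin q := fun f i =>
    if h : (Finset.univ.filter (fun i' => i' < i ∧ f i' = f i)).Nonempty
    then Sum.inr ((Finset.univ.filter (fun i' => i' < i ∧ f i' = f i)).min' h)
    else Sum.inl (f i) with hF
  have hwnonneg : ∀ x, 0 ≤ w x := by
    rintro (a | b) <;> simp [hw, hτ]
  have hprodw : ∀ f : Fin q → Fin n, ∏ i, w (F f i) = τ ^ (firsts f).card := by
    intro f
    have hstep : ∀ i, w (F f i) = if (∀ i' < i, f i' ≠ f i) then τ else 1 := by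
      intro i
      by_cases h : (Finset.univ.filter (fun i' => i' < i ∧ f i' = f i)).Nonempty
      · obtain ⟨i', hi'⟩ := h
        simp only [Finset.mem_filter, Finset.mem_univ, true_and] at hi'
        have hnot : ¬ (∀ i' < i, f i' ≠ f i) := fun hall => hall i' hi'.1 hi'.2
        simp only [hF]
        rw [dif_pos ⟨i', by simp [hi'.1, hi'.2]⟩, if_neg hnot]
        simp [hw]
      · have hall : ∀ i' < i, f i' ≠ f i := fun i' hlt heq => h ⟨i', by simp [hlt, heq]⟩
        simp only [hF]
        rw [dif_neg h, if_pos hall]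
        simp [hw]
    calc ∏ i, w (F f i) = ∏ i, if (∀ i' < i, f i' ≠ f i) then τ else (1:ℝ) :=
          Finset.prod_congr rfl (fun i _ => hstep i)
      _ = τ ^ (firsts f).card := by
          rw [Finset.prod_ite, Finset.prod_const, Finset.prod_const, one_pow, mul_one]
          rfl
  have hFinj : Function.Injective F := by
    intro f g hfg
    have key : ∀ m : ℕ, ∀ i : Fin q, (i : ℕ) = m → f i = g i := by
      intro m
      induction m using Nat.strong_induction_on with
      | _ m ih =>
      intro i him
      have hFi : F f i = F g i := congrFun hfg i
      by_cases h : (Finset.univ.filter (fun i' => i' < i ∧ f i' = f i)).Nonempty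
      · set s := Finset.univ.filter (fun i' => i' < i ∧ f i' = f i) with hs
        have hmm := Finset.mem_filter.1 (s.min'_mem h)
        obtain ⟨hlt, hval⟩ := hmm.2
        by_cases h' : (Finset.univ.filter (fun i' => i' < i ∧ g i' = g i)).Nonempty
        · set t := Finset.univ.filter (fun i' => i' < i ∧ g i' = g i) with ht
          have hmm' := Finset.mem_filter.1 (t.min'_mem h')
          obtain ⟨hlt', hval'⟩ := hmm'.2
          simp only [hF] at hFi
          simp only [dif_pos (show (Finset.univ.filter (fun i' => i' < i ∧ f i' = f i)).Nonempty from h), dif_pos (show (Finset.univ.filter (fun i' => i' < i ∧ g i' = g i)).Nonempty from h')] at hFi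
          have hmin : s.min' h = t.min' h' := by exact Sum.inr.inj hFi
          have := ih ((s.min' h : Fin q) : ℕ) (him ▸ hlt) (s.min' h) rfl
          rw [← hval, this, hmin, hval']
        · simp only [hF] at hFi
          simp only [dif_pos (show (Finset.univ.filter (fun i' => i' < i ∧ f i' = f i)).Nonempty from h), dif_neg h'] at hFi
          exact absurd hFi (by simp)
      · by_cases h' : (Finset.univ.filter (fun i' => i' < i ∧ g i' = g i)).Nonempty
        · simp only [hF] at hFi
          simp only [dif_neg h, dif_pos h'] at hFi
          exact absurd hFi (by simp)
        · simp only [hF] at hFi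
          simp only [dif_neg h, dif_neg h'] at hFi
          exact Sum.inl.inj hFi
    funext i
    exact key i.val i rfl
  calc ∑ f : Fin q → Fin n, τ ^ (Finset.univ.image f).card
      = ∑ f : Fin q → Fin n, ∏ i, w (F f i) := by
        refine Finset.sum_congr rfl (fun f _ => ?_)
        rw [hprodw, card_image_eq_card_firsts]
    _ = ∑ h ∈ Finset.univ.image F, ∏ i, w (h i) := by
        rw [Finset.sum_image (fun a _ b _ hab => hFinj hab)]
    _ ≤ ∑ h : Fin q → Fin n ⊕ Fin q, ∏ i, w (h i) := by
        apply Finset.sum_le_sum_of_subset_of_nonneg (Finset.subset_univ _)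
        intro h _ _
        exact Finset.prod_nonneg (fun i _ => hwnonneg _)
    _ = (∑ x, w x) ^ q := (Fintype.sum_pow w q).symm
    _ = (τ * n + q) ^ q := by
        congr 1
        rw [Fintype.sum_sum_type]
        simp [hw, mul_comm]

theorem bernoulli_sum_moment_bound
    {Ω : Type*} [MeasureSpace Ω] [IsProbabilityMeasure (ℙ : Measure Ω)]
    (n : ℕ) (τ : ℝ) (hτ0 : 0 < τ) (hτ1 : τ < 1)
    (ξ : Fin n → Ω → ℝ) (hmeas : ∀ j, Measurable (ξ j))
    (hindep : iIndepFun ξ ℙ)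
    (h1 : ∀ j, ℙ {ω | ξ j ω = 1} = ENNReal.ofReal τ)
    (h0 : ∀ j, ℙ {ω | ξ j ω = 0} = ENNReal.ofReal (1 - τ))
    (q : ℕ) (hq : 0 < q) :
    (∫ ω, (∑ j, ξ j ω) ^ q) ≤ ((q : ℝ) + Real.exp 1 * τ * n) ^ q := by
  classical
  have hτ0' : (0:ℝ) ≤ τ := hτ0.le
  -- almost surely every ξ j takes values in {0, 1}
  have hae : ∀ᵐ ω ∂ℙ, ∀ j, ξ j ω = 0 ∨ ξ j ω = 1 := by
    rw [MeasureTheory.ae_all_iff]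
    intro j
    have hm0 : MeasurableSet {ω | ξ j ω = 0} := (hmeas j) (measurableSet_singleton 0)
    have hm1 : MeasurableSet {ω | ξ j ω = 1} := (hmeas j) (measurableSet_singleton 1)
    have hdisj : Disjoint {ω | ξ j ω = 0} {ω | ξ j ω = 1} := by
      rw [Set.disjoint_left]
      intro ω hω0 hω1
      simp only [Set.mem_setOf_eq] at hω0 hω1
      rw [hω0] at hω1
      exact zero_ne_one hω1
    have hu : ℙ ({ω | ξ j ω = 0} ∪ {ω | ξ j ω = 1}) = 1 := by
      rw [measure_union hdisj hm1, h0 j, h1 j,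
        ← ENNReal.ofReal_add (by linarith) hτ0']
      norm_num
    have hcompl : ℙ ({ω | ξ j ω = 0} ∪ {ω | ξ j ω = 1})ᶜ = 0 := by
      rw [measure_compl (hm0.union hm1) (measure_ne_top _ _), hu, measure_univ,
        tsub_self]
    rw [MeasureTheory.ae_iff]
    have hset : {a | ¬(ξ j a = 0 ∨ ξ j a = 1)} = ({ω | ξ j ω = 0} ∪ {ω | ξ j ω = 1})ᶜ := by
      ext ω; simp [not_or]
    rw [hset]
    exact hcompl
  have habs : ∀ᵐ ω ∂ℙ, ∀ j, |ξ j ω| ≤ 1 := by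
    filter_upwards [hae] with ω hω j
    rcases hω j with h | h <;> simp [h]
  -- integrability of finite products of the ξ j
  have hintS : ∀ s : Finset (Fin n), Integrable (fun ω => ∏ j ∈ s, ξ j ω) ℙ := by
    intro s
    refine ⟨(Finset.measurable_prod s (fun j _ => hmeas j)).aestronglyMeasurable,
      HasFiniteIntegral.of_bounded (C := 1) ?_⟩
    filter_upwards [habs] with ω hω
    rw [Real.norm_eq_abs, Finset.abs_prod]
    exact Finset.prod_le_one (fun j _ => abs_nonneg _) (fun j _ => hω j)
  -- expectation of each ξ j
  have hexp : ∀ j, ∫ ω, ξ j ω = τ := by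
    intro j
    have heq : ξ j =ᵐ[ℙ] ({ω | ξ j ω = 1}).indicator (fun _ => (1:ℝ)) := by
      filter_upwards [hae] with ω hω
      rcases hω j with h | h
      · rw [Set.indicator_of_notMem, h]
        simp only [Set.mem_setOf_eq, h]
        exact zero_ne_one
      · rw [Set.indicator_of_mem, h]
        exact h
    have hm1 : MeasurableSet {ω | ξ j ω = 1} := (hmeas j) (measurableSet_singleton 1)
    rw [integral_congr_ae heq, integral_indicator_const _ hm1,
      measureReal_def, h1 j, ENNReal.toReal_ofReal hτ0']
    simp
  -- expectation of products over finsets, via independence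
  have hprod : ∀ s : Finset (Fin n), ∫ ω, ∏ j ∈ s, ξ j ω = τ ^ s.card := by
    intro s
    induction s using Finset.induction_on with
    | empty => simp
    | @insert i s hi ih =>
      have hIndep : IndepFun (∏ j ∈ s, ξ j) (ξ i) ℙ :=
        hindep.indepFun_finset_prod_of_notMem hmeas hi
      have e1 : (fun ω => ∏ j ∈ insert i s, ξ j ω) = (∏ j ∈ s, ξ j) * (ξ i) := by
        funext ω
        simp [Finset.prod_insert hi, Finset.prod_apply, mul_comm]
      have e2 : Integrable (∏ j ∈ s, ξ j) ℙ := by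
        have := hintS s
        simpa [Finset.prod_fn] using this
      calc ∫ ω, ∏ j ∈ insert i s, ξ j ω = ∫ ω, ((∏ j ∈ s, ξ j) * ξ i) ω := by rw [e1]
        _ = (∫ ω, (∏ j ∈ s, ξ j) ω) * ∫ ω, ξ i ω :=
            hIndep.integral_mul_eq_mul_integral e2.aestronglyMeasurable (hmeas i).aestronglyMeasurable
        _ = τ ^ s.card * τ := by
            rw [hexp i]
            congr 1
            have : (fun ω => (∏ j ∈ s, ξ j) ω) = fun ω => ∏ j ∈ s, ξ j ω := by
              funext ω; simp [Finset.prod_apply]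
            rw [this, ih]
        _ = τ ^ (insert i s).card := by rw [Finset.card_insert_of_notMem hi, pow_succ]
  -- integrability of products indexed by Fin q
  have hintf : ∀ f : Fin q → Fin n, Integrable (fun ω => ∏ i, ξ (f i) ω) ℙ := by
    intro f
    refine ⟨(Finset.measurable_prod Finset.univ (fun i _ => hmeas (f i))).aestronglyMeasurable,
      HasFiniteIntegral.of_bounded (C := 1) ?_⟩
    filter_upwards [habs] with ω hω
    rw [Real.norm_eq_abs, Finset.abs_prod]
    exact Finset.prod_le_one (fun i _ => abs_nonneg _) (fun i _ => hω (f i))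
  have hFint : ∀ f : Fin q → Fin n,
      ∫ ω, ∏ i, ξ (f i) ω = τ ^ (Finset.univ.image f).card := by
    intro f
    have heq : (fun ω => ∏ i, ξ (f i) ω)
        =ᵐ[ℙ] (fun ω => ∏ j ∈ Finset.univ.image f, ξ j ω) := by
      filter_upwards [hae] with ω hω
      have h2 : ∀ j ∈ Finset.univ.image f,
          ∏ i ∈ Finset.univ.filter (fun i => f i = j), ξ (f i) ω = ξ j ω := by
        intro j hj
        rw [Finset.prod_congr rfl (fun i hi => by rw [(Finset.mem_filter.1 hi).2]),
          Finset.prod_const]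
        have hne : (Finset.univ.filter (fun i => f i = j)).Nonempty := by
          obtain ⟨i, -, hfi⟩ := Finset.mem_image.1 hj
          exact ⟨i, by simp [hfi]⟩
        have hcard : (Finset.univ.filter (fun i => f i = j)).card ≠ 0 :=
          Finset.card_ne_zero.2 hne
        rcases hω j with h | h
        · rw [h, zero_pow hcard]
        · rw [h, one_pow]
      calc ∏ i, ξ (f i) ω
          = ∏ j ∈ Finset.univ.image f,
              ∏ i ∈ Finset.univ.filter (fun i => f i = j), ξ (f i) ω :=
            (Finset.prod_fiberwise_of_maps_to
              (fun i _ => Finset.mem_image_of_mem f (Finset.mem_univ i)) _).symm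
        _ = ∏ j ∈ Finset.univ.image f, ξ j ω := Finset.prod_congr rfl h2
    rw [integral_congr_ae heq, hprod]
  calc (∫ ω, (∑ j, ξ j ω) ^ q)
      = ∫ ω, ∑ f : Fin q → Fin n, ∏ i, ξ (f i) ω := by
        simp_rw [Fintype.sum_pow]
    _ = ∑ f : Fin q → Fin n, ∫ ω, ∏ i, ξ (f i) ω :=
        integral_finset_sum _ (fun f _ => hintf f)
    _ = ∑ f : Fin q → Fin n, τ ^ (Finset.univ.image f).card :=
        Finset.sum_congr rfl (fun f _ => hFint f)
    _ ≤ (τ * n + q) ^ q := comb_bound n q τ hτ0'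
    _ ≤ ((q : ℝ) + Real.exp 1 * τ * n) ^ q := by
        have he : (1:ℝ) ≤ Real.exp 1 := by
          have := Real.add_one_le_exp (1:ℝ); linarith
        have hn : (0:ℝ) ≤ (n:ℝ) := Nat.cast_nonneg n
        have hq' : (0:ℝ) ≤ (q:ℝ) := Nat.cast_nonneg q
        apply pow_le_pow_left₀ (by positivity)
        nlinarith [mul_nonneg hτ0' hn, mul_le_mul_of_nonneg_right he (mul_nonneg hτ0' hn)]
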